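/- Let (H, σ) be a Long bialgebra and (M, ρ) a right H-comodule. Define h · m := ∑ σ(m₍₁₎ ⊗ h) m₍₀₎ for h ∈ H, m ∈ M. Then this action makes M a left H-module (i.e. 1 · m = m and (gh) · m = g · (h · m) for all g, h ∈ H, m ∈ M), and the dimodule compatibility condition ρ(h · m) = ∑ (h · m₍₀₎) ⊗ m₍₁₎ holds for all h ∈ H and m ∈ M. -/
import Mathlib


open TensorProduct

noncomputable section

variable (k : Type*) [Field k] (H : Type*) [Ring H] [Algebra k H]

/-- Condition (L1) for a comultiplication Δ and a bilinear map σ: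
∑ σ(x₍₁₎ ⊗ y) x₍₂₎ = ∑ σ(x₍₂₎ ⊗ y) x₍₁₎, as an equality of linear maps H ⊗ H → H. -/
def CondL1 (Δ : H →ₗ[k] H ⊗[k] H) (σ : H ⊗[k] H →ₗ[k] k) : Prop :=
  (TensorProduct.rid k H).toLinearMap ∘ₗ
      TensorProduct.map LinearMap.id σ ∘ₗ
      (TensorProduct.assoc k H H H).toLinearMap ∘ₗ
      TensorProduct.map ((TensorProduct.comm k H H).toLinearMap ∘ₗ Δ) LinearMap.id =
    (TensorProduct.rid k H).toLinearMap ∘ₗ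
      TensorProduct.map LinearMap.id σ ∘ₗ
      (TensorProduct.assoc k H H H).toLinearMap ∘ₗ
      TensorProduct.map Δ LinearMap.id

/-- Condition (L2): σ(x ⊗ 1) = ε(x). -/
def CondL2 (ε : H →ₗ[k] k) (σ : H ⊗[k] H →ₗ[k] k) : Prop :=
  ∀ x : H, σ (x ⊗ₜ[k] (1 : H)) = ε x

/-- Condition (L3): σ(x ⊗ yz) = ∑ σ(x₍₁₎ ⊗ y) σ(x₍₂₎ ⊗ z),
as an equality of linear maps H ⊗ (H ⊗ H) → k. -/
def CondL3 (Δ : H →ₗ[k] H ⊗[k] H) (σ : H ⊗[k] H →ₗ[k] k) : Prop :=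
  σ ∘ₗ TensorProduct.map LinearMap.id (LinearMap.mul' k H) =
    (TensorProduct.lid k k).toLinearMap ∘ₗ
      TensorProduct.map σ σ ∘ₗ
      (TensorProduct.tensorTensorTensorComm k H H H H).toLinearMap ∘ₗ
      TensorProduct.map Δ LinearMap.id

/-- Condition (L4): σ(1 ⊗ x) = ε(x). -/
def CondL4 (ε : H →ₗ[k] k) (σ : H ⊗[k] H →ₗ[k] k) : Prop :=
  ∀ x : H, σ ((1 : H) ⊗ₜ[k] x) = ε x

/-- Condition (L5): σ(xy ⊗ z) = ∑ σ(y ⊗ z₍₁₎) σ(x ⊗ z₍₂₎),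
as an equality of linear maps (H ⊗ H) ⊗ H → k. -/
def CondL5 (Δ : H →ₗ[k] H ⊗[k] H) (σ : H ⊗[k] H →ₗ[k] k) : Prop :=
  σ ∘ₗ TensorProduct.map (LinearMap.mul' k H) LinearMap.id =
    (TensorProduct.lid k k).toLinearMap ∘ₗ
      TensorProduct.map σ σ ∘ₗ
      (TensorProduct.tensorTensorTensorComm k H H H H).toLinearMap ∘ₗ
      TensorProduct.map LinearMap.id Δ ∘ₗ
      TensorProduct.map (TensorProduct.comm k H H).toLinearMap LinearMap.id

/-- (H, σ) is a Long bialgebra (relative to comultiplication Δ and counit ε):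
conditions (L1)–(L5) hold. -/
def IsLongBialgebra (Δ : H →ₗ[k] H ⊗[k] H) (ε : H →ₗ[k] k)
    (σ : H ⊗[k] H →ₗ[k] k) : Prop :=
  CondL1 k H Δ σ ∧ CondL2 k H ε σ ∧ CondL3 k H Δ σ ∧ CondL4 k H ε σ ∧ CondL5 k H Δ σ

end

noncomputable section

variable {k : Type*} [Field k] {H : Type*} [Ring H] [Bialgebra k H]
variable {M : Type*} [AddCommGroup M] [Module k M]

/-- Coassociativity of a right comodule structure map ρ : M → M ⊗ H. -/
def IsCoassoc (ρ : M →ₗ[k] M ⊗[k] H) : Prop :=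
  TensorProduct.map LinearMap.id (Coalgebra.comul : H →ₗ[k] H ⊗[k] H) ∘ₗ ρ =
    (TensorProduct.assoc k M H H).toLinearMap ∘ₗ TensorProduct.map ρ LinearMap.id ∘ₗ ρ

/-- Counitality of a right comodule structure map ρ : M → M ⊗ H. -/
def IsCounital (ρ : M →ₗ[k] M ⊗[k] H) : Prop :=
  (TensorProduct.rid k M).toLinearMap ∘ₗ
      TensorProduct.map LinearMap.id (Coalgebra.counit : H →ₗ[k] k) ∘ₗ ρ =
    LinearMap.id

/-- The induced action h · m = ∑ σ(m₍₁₎ ⊗ h) m₍₀₎. -/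
def act (σ : H ⊗[k] H →ₗ[k] k) (ρ : M →ₗ[k] M ⊗[k] H) (h : H) : M →ₗ[k] M :=
  (TensorProduct.rid k M).toLinearMap ∘ₗ
    TensorProduct.map LinearMap.id (σ ∘ₗ (TensorProduct.mk k H H).flip h) ∘ₗ ρ

end


noncomputable section Helpers
variable {k : Type*} [Field k] {H : Type*} [Ring H] [Algebra k H]
variable {M : Type*} [AddCommGroup M] [Module k M]

lemma lemA {N : Type*} [AddCommGroup N] [Module k N] (f : H →ₗ[k] k) (φ : M →ₗ[k] N) :
    φ ∘ₗ (TensorProduct.rid k M).toLinearMap ∘ₗ TensorProduct.map LinearMap.id f =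
    (TensorProduct.rid k N).toLinearMap ∘ₗ TensorProduct.map LinearMap.id f ∘ₗ
      TensorProduct.map φ LinearMap.id := by
  apply TensorProduct.ext'
  intro m x
  simp

lemma lemB (f : H →ₗ[k] k) :
    (TensorProduct.rid k (M ⊗[k] H)).toLinearMap ∘ₗ TensorProduct.map LinearMap.id f ∘ₗ
      (TensorProduct.assoc k M H H).symm.toLinearMap =
    TensorProduct.map LinearMap.id
      ((TensorProduct.rid k H).toLinearMap ∘ₗ TensorProduct.map LinearMap.id f) := by
  apply TensorProduct.ext'
  intro m t
  induction t using TensorProduct.induction_on with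
  | zero => simp
  | tmul a b => simp [smul_tmul']
  | add u v hu hv => simp only [tmul_add, map_add, hu, hv]

lemma lemC (f : H →ₗ[k] k) :
    TensorProduct.map ((TensorProduct.rid k M).toLinearMap ∘ₗ TensorProduct.map LinearMap.id f)
        LinearMap.id ∘ₗ (TensorProduct.assoc k M H H).symm.toLinearMap =
    TensorProduct.map LinearMap.id
      ((TensorProduct.rid k H).toLinearMap ∘ₗ TensorProduct.map LinearMap.id f ∘ₗ
        (TensorProduct.comm k H H).toLinearMap) := by
  apply TensorProduct.ext'
  intro m t
  induction t using TensorProduct.induction_on with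
  | zero => simp
  | tmul a b =>
      simp only [LinearMap.comp_apply, LinearEquiv.coe_coe, assoc_symm_tmul, map_tmul,
        LinearMap.id_coe, id_eq, rid_tmul, comm_tmul, smul_tmul']
      rw [smul_tmul]
  | add u v hu hv => simp only [tmul_add, map_add, hu, hv]

lemma lemD (σ : H ⊗[k] H →ₗ[k] k) (g h : H) :
    (σ ∘ₗ (TensorProduct.mk k H H).flip g) ∘ₗ
      ((TensorProduct.rid k H).toLinearMap ∘ₗ
        TensorProduct.map LinearMap.id (σ ∘ₗ (TensorProduct.mk k H H).flip h)) =
    LinearMap.mul' k k ∘ₗ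
      TensorProduct.map (σ ∘ₗ (TensorProduct.mk k H H).flip g)
        (σ ∘ₗ (TensorProduct.mk k H H).flip h) := by
  apply TensorProduct.ext'
  intro a b
  simp [smul_eq_mul, mul_comm]

set_option synthInstance.maxHeartbeats 400000 in
lemma aux1 (σ : H ⊗[k] H →ₗ[k] k) (h : H) (t : H ⊗[k] H) :
    (TensorProduct.rid k H) (TensorProduct.map LinearMap.id σ
        ((TensorProduct.assoc k H H H) (t ⊗ₜ[k] h))) =
    (TensorProduct.rid k H) (TensorProduct.map LinearMap.id
        (σ ∘ₗ (TensorProduct.mk k H H).flip h) t) := by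
  induction t using TensorProduct.induction_on with
  | zero => simp only [zero_tmul, map_zero]
  | tmul a b => simp
  | add u v hu hv => simp only [add_tmul, map_add, hu, hv]

lemma aux2 (σ : H ⊗[k] H →ₗ[k] k) (g h : H) (t : H ⊗[k] H) :
    (TensorProduct.lid k k) (TensorProduct.map σ σ
        ((TensorProduct.tensorTensorTensorComm k H H H H) (t ⊗ₜ[k] (g ⊗ₜ[k] h)))) =
    (LinearMap.mul' k k) (TensorProduct.map (σ ∘ₗ (TensorProduct.mk k H H).flip g)
        (σ ∘ₗ (TensorProduct.mk k H H).flip h) t) := by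
  induction t using TensorProduct.induction_on with
  | zero => simp
  | tmul a b => simp [smul_eq_mul]
  | add u v hu hv => simp only [add_tmul, map_add, hu, hv]

lemma map_id_comp {P Q R : Type*} [AddCommGroup P] [Module k P] [AddCommGroup Q] [Module k Q]
    [AddCommGroup R] [Module k R] (A : Q →ₗ[k] R) (B : P →ₗ[k] Q) :
    TensorProduct.map (LinearMap.id : M →ₗ[k] M) (A ∘ₗ B) =
      TensorProduct.map LinearMap.id A ∘ₗ TensorProduct.map LinearMap.id B := by
  rw [← TensorProduct.map_comp, LinearMap.id_comp]

lemma map_comp_id {P Q R : Type*} [AddCommGroup P] [Module k P] [AddCommGroup Q] [Module k Q]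
    [AddCommGroup R] [Module k R] (A : Q →ₗ[k] R) (B : P →ₗ[k] Q) :
    TensorProduct.map (A ∘ₗ B) (LinearMap.id : M →ₗ[k] M) =
      TensorProduct.map A LinearMap.id ∘ₗ TensorProduct.map B LinearMap.id := by
  rw [← TensorProduct.map_comp, LinearMap.id_comp]

end Helpers

noncomputable section Consequences

open TensorProduct

variable {k : Type*} [Field k] {H : Type*} [Ring H] [Algebra k H]

lemma l1cons (Δ : H →ₗ[k] H ⊗[k] H) (σ : H ⊗[k] H →ₗ[k] k) (hL1 : CondL1 k H Δ σ)
    (h x : H) :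
    (TensorProduct.rid k H) (TensorProduct.map LinearMap.id
        (σ ∘ₗ (TensorProduct.mk k H H).flip h) ((TensorProduct.comm k H H) (Δ x))) =
    (TensorProduct.rid k H) (TensorProduct.map LinearMap.id
        (σ ∘ₗ (TensorProduct.mk k H H).flip h) (Δ x)) := by
  have e := LinearMap.congr_fun hL1 (x ⊗ₜ[k] h)
  simp only [LinearMap.comp_apply, map_tmul, LinearEquiv.coe_coe, LinearMap.id_coe, id_eq,
    aux1] at e
  exact e

lemma l3cons (Δ : H →ₗ[k] H ⊗[k] H) (σ : H ⊗[k] H →ₗ[k] k) (hL3 : CondL3 k H Δ σ)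
    (g h x : H) :
    σ (x ⊗ₜ[k] (g * h)) =
    (LinearMap.mul' k k) (TensorProduct.map (σ ∘ₗ (TensorProduct.mk k H H).flip g)
        (σ ∘ₗ (TensorProduct.mk k H H).flip h) (Δ x)) := by
  have e := LinearMap.congr_fun hL3 (x ⊗ₜ[k] (g ⊗ₜ[k] h))
  simp only [LinearMap.comp_apply, map_tmul, LinearEquiv.coe_coe, LinearMap.id_coe, id_eq,
    LinearMap.mul'_apply, aux2] at e
  exact e

end Consequences

noncomputable section MainLemmas

open TensorProduct

variable {k : Type*} [Field k] {H : Type*} [Ring H] [Bialgebra k H]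
variable {M : Type*} [AddCommGroup M] [Module k M]

lemma rho_act (σ : H ⊗[k] H →ₗ[k] k) (ρ : M →ₗ[k] M ⊗[k] H) (hcoassoc : IsCoassoc ρ)
    (h : H) (m : M) :
    ρ (act σ ρ h m) =
    TensorProduct.map LinearMap.id
        ((TensorProduct.rid k H).toLinearMap ∘ₗ
          TensorProduct.map LinearMap.id (σ ∘ₗ (TensorProduct.mk k H H).flip h))
      (TensorProduct.map LinearMap.id (Coalgebra.comul : H →ₗ[k] H ⊗[k] H) (ρ m)) := by
  set f : H →ₗ[k] k := σ ∘ₗ (TensorProduct.mk k H H).flip h with hf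
  have hc2 : TensorProduct.map ρ LinearMap.id (ρ m) =
      (TensorProduct.assoc k M H H).symm
        (TensorProduct.map LinearMap.id (Coalgebra.comul : H →ₗ[k] H ⊗[k] H) (ρ m)) := by
    have hc := LinearMap.congr_fun hcoassoc m
    simp only [LinearMap.comp_apply, LinearEquiv.coe_coe] at hc
    exact (LinearEquiv.eq_symm_apply _).mpr hc.symm
  have hA := LinearMap.congr_fun (lemA f ρ) (ρ m)
  simp only [LinearMap.comp_apply, LinearEquiv.coe_coe] at hA
  have hB := LinearMap.congr_fun (lemB (M := M) f)
      (TensorProduct.map LinearMap.id (Coalgebra.comul : H →ₗ[k] H ⊗[k] H) (ρ m))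
  simp only [LinearMap.comp_apply, LinearEquiv.coe_coe] at hB
  show ρ ((TensorProduct.rid k M) (TensorProduct.map LinearMap.id f (ρ m))) = _
  rw [hA, hc2, hB]

end MainLemmas

theorem comodule_over_long_bialgebra_is_dimodule
    {k : Type*} [Field k] {H : Type*} [Ring H] [Bialgebra k H]
    {M : Type*} [AddCommGroup M] [Module k M]
    (σ : H ⊗[k] H →ₗ[k] k)
    (hLong : IsLongBialgebra k H (Coalgebra.comul : H →ₗ[k] H ⊗[k] H)
      (Coalgebra.counit : H →ₗ[k] k) σ)
    (ρ : M →ₗ[k] M ⊗[k] H) (hcoassoc : IsCoassoc ρ) (hcounit : IsCounital ρ) :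
    (∀ m : M, act σ ρ (1 : H) m = m) ∧
    (∀ (g h : H) (m : M), act σ ρ (g * h) m = act σ ρ g (act σ ρ h m)) ∧
    (∀ h : H, ρ ∘ₗ act σ ρ h = TensorProduct.map (act σ ρ h) LinearMap.id ∘ₗ ρ) := by
  obtain ⟨hL1, hL2, hL3, hL4, hL5⟩ := hLong
  refine ⟨?_, ?_, ?_⟩
  · -- unit
    intro m
    have hf1 : (σ ∘ₗ (TensorProduct.mk k H H).flip (1 : H)) =
        (Coalgebra.counit : H →ₗ[k] k) := LinearMap.ext fun x => by simpa using hL2 x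
    have hcu := LinearMap.congr_fun hcounit m
    simp only [LinearMap.comp_apply, LinearEquiv.coe_coe, LinearMap.id_apply] at hcu
    show (TensorProduct.rid k M) (TensorProduct.map LinearMap.id
        (σ ∘ₗ (TensorProduct.mk k H H).flip (1 : H)) (ρ m)) = m
    rw [hf1]
    exact hcu
  · -- associativity
    intro g h m
    have hr := rho_act σ ρ hcoassoc h m
    have hS : (σ ∘ₗ (TensorProduct.mk k H H).flip (g * h)) =
        (LinearMap.mul' k k ∘ₗ
          TensorProduct.map (σ ∘ₗ (TensorProduct.mk k H H).flip g)
            (σ ∘ₗ (TensorProduct.mk k H H).flip h)) ∘ₗ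
          (Coalgebra.comul : H →ₗ[k] H ⊗[k] H) :=
      LinearMap.ext fun x => by
        simpa using l3cons (Coalgebra.comul : H →ₗ[k] H ⊗[k] H) σ hL3 g h x
    have lhs1 : act σ ρ (g * h) m = (TensorProduct.rid k M) (TensorProduct.map LinearMap.id
        (σ ∘ₗ (TensorProduct.mk k H H).flip (g * h)) (ρ m)) := rfl
    have rhs1 : act σ ρ g (act σ ρ h m) = (TensorProduct.rid k M)
        (TensorProduct.map LinearMap.id (σ ∘ₗ (TensorProduct.mk k H H).flip g)
          (ρ (act σ ρ h m))) := rfl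
    have e1 := LinearMap.congr_fun (map_id_comp (M := M)
        (LinearMap.mul' k k ∘ₗ
          TensorProduct.map (σ ∘ₗ (TensorProduct.mk k H H).flip g)
            (σ ∘ₗ (TensorProduct.mk k H H).flip h))
        (Coalgebra.comul : H →ₗ[k] H ⊗[k] H)) (ρ m)
    simp only [LinearMap.comp_apply] at e1
    have e2 := LinearMap.congr_fun (map_id_comp (M := M)
        ((σ ∘ₗ (TensorProduct.mk k H H).flip g) ∘ₗ
          ((TensorProduct.rid k H).toLinearMap ∘ₗ
            TensorProduct.map LinearMap.id (σ ∘ₗ (TensorProduct.mk k H H).flip h)))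
        (Coalgebra.comul : H →ₗ[k] H ⊗[k] H)) (ρ m)
    simp only [LinearMap.comp_apply] at e2
    have e3 := LinearMap.congr_fun (map_id_comp (M := M)
        (σ ∘ₗ (TensorProduct.mk k H H).flip g)
        ((TensorProduct.rid k H).toLinearMap ∘ₗ
          TensorProduct.map LinearMap.id (σ ∘ₗ (TensorProduct.mk k H H).flip h)))
        (TensorProduct.map LinearMap.id (Coalgebra.comul : H →ₗ[k] H ⊗[k] H) (ρ m))
    simp only [LinearMap.comp_apply] at e3
    rw [lhs1, rhs1, hr, hS, e1, ← e3, ← e2, lemD σ g h, ← e1]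
  · -- dimodule compatibility
    intro h
    apply LinearMap.ext
    intro m
    simp only [LinearMap.comp_apply]
    rw [rho_act σ ρ hcoassoc h m]
    have hsplit : TensorProduct.map (act σ ρ h) (LinearMap.id : H →ₗ[k] H) =
        TensorProduct.map ((TensorProduct.rid k M).toLinearMap ∘ₗ
            TensorProduct.map LinearMap.id (σ ∘ₗ (TensorProduct.mk k H H).flip h))
          LinearMap.id ∘ₗ TensorProduct.map ρ LinearMap.id := by
      rw [← TensorProduct.map_comp, LinearMap.id_comp]
      rfl
    have hc2 : TensorProduct.map ρ LinearMap.id (ρ m) =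
        (TensorProduct.assoc k M H H).symm
          (TensorProduct.map LinearMap.id (Coalgebra.comul : H →ₗ[k] H ⊗[k] H) (ρ m)) := by
      have hc := LinearMap.congr_fun hcoassoc m
      simp only [LinearMap.comp_apply, LinearEquiv.coe_coe] at hc
      exact (LinearEquiv.eq_symm_apply _).mpr hc.symm
    have hC := LinearMap.congr_fun (lemC (M := M) (σ ∘ₗ (TensorProduct.mk k H H).flip h))
        (TensorProduct.map LinearMap.id (Coalgebra.comul : H →ₗ[k] H ⊗[k] H) (ρ m))
    simp only [LinearMap.comp_apply, LinearEquiv.coe_coe] at hC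
    rw [hsplit, LinearMap.comp_apply, hc2, hC]
    have hFG : ((TensorProduct.rid k H).toLinearMap ∘ₗ
          TensorProduct.map LinearMap.id (σ ∘ₗ (TensorProduct.mk k H H).flip h)) ∘ₗ
          (Coalgebra.comul : H →ₗ[k] H ⊗[k] H) =
        ((TensorProduct.rid k H).toLinearMap ∘ₗ
          TensorProduct.map LinearMap.id (σ ∘ₗ (TensorProduct.mk k H H).flip h) ∘ₗ
          (TensorProduct.comm k H H).toLinearMap) ∘ₗ
          (Coalgebra.comul : H →ₗ[k] H ⊗[k] H) :=
      LinearMap.ext fun x => by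
        simpa using (l1cons (Coalgebra.comul : H →ₗ[k] H ⊗[k] H) σ hL1 h x).symm
    have f1 := LinearMap.congr_fun (map_id_comp (M := M)
        ((TensorProduct.rid k H).toLinearMap ∘ₗ
          TensorProduct.map LinearMap.id (σ ∘ₗ (TensorProduct.mk k H H).flip h))
        (Coalgebra.comul : H →ₗ[k] H ⊗[k] H)) (ρ m)
    simp only [LinearMap.comp_apply] at f1
    have f2 := LinearMap.congr_fun (map_id_comp (M := M)
        ((TensorProduct.rid k H).toLinearMap ∘ₗ
          TensorProduct.map LinearMap.id (σ ∘ₗ (TensorProduct.mk k H H).flip h) ∘ₗ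
          (TensorProduct.comm k H H).toLinearMap)
        (Coalgebra.comul : H →ₗ[k] H ⊗[k] H)) (ρ m)
    simp only [LinearMap.comp_apply] at f2
    rw [← f1, ← f2, hFG]
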